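/- Let U ⊆ ℂ be open, let a, b, c, d ∈ ℂ with a·d − b·c = 1 and â, b̂, ĉ, d̂ ∈ ℂ with â·d̂ − b̂·ĉ = 1, and set γ(z) = (a·z+b)/(c·z+d), ρ(w) = (â·w+b̂)/(ĉ·w+d̂). Let f, F, g : ℂ → ℂ be analytic on U such that for all z ∈ U with c·z+d ≠ 0: γ(z) ∈ U, g(γ(z)) = g(z), ĉ·f(z)+d̂ ≠ 0 and f(γ(z)) = ρ(f(z)), and ĉ·F(z)+d̂ ≠ 0 and F(γ(z)) = ρ(F(z)). Define ḟ(z) = f'(z)/g'(z), f̈(z) = (ḟ)'(z)/g'(z), and h(z) = ḟ(z)/(F(z) − f(z)) + f̈(z)/(2·ḟ(z)). Then for every z ∈ U such that c·z+d ≠ 0, g'(z) ≠ 0, g'(γ(z)) ≠ 0, ḟ ≠ 0 and F ≠ f at both z and γ(z), one has h(γ(z)) = h(z). -/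

import Mathlib

set_option maxHeartbeats 1000000


/-- Inverse direction of the paper's Corollary 1: from two equivariant functions
`F ≠ f` and an invariant `g`, the function `h = ḟ/(F − f) + f̈/(2ḟ)` is invariant,
where `ḟ = df/dg`. -/
theorem invariant_of_equivariant_pair
    (U : Set ℂ) (hU : IsOpen U)
    (a b c d ah bh ch dh : ℂ)
    (hdet : a * d - b * c = 1) (hdet' : ah * dh - bh * ch = 1)
    (γ ρ : ℂ → ℂ)
    (hγ : γ = fun z => (a * z + b) / (c * z + d))
    (hρ : ρ = fun w => (ah * w + bh) / (ch * w + dh))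
    (f F g : ℂ → ℂ)
    (hf : AnalyticOnNhd ℂ f U) (hF : AnalyticOnNhd ℂ F U) (hg : AnalyticOnNhd ℂ g U)
    (hmaps : ∀ z ∈ U, c * z + d ≠ 0 → γ z ∈ U)
    (hgi : ∀ z ∈ U, c * z + d ≠ 0 → g (γ z) = g z)
    (hfden : ∀ z ∈ U, c * z + d ≠ 0 → ch * f z + dh ≠ 0)
    (hfe : ∀ z ∈ U, c * z + d ≠ 0 → f (γ z) = ρ (f z))
    (hFden : ∀ z ∈ U, c * z + d ≠ 0 → ch * F z + dh ≠ 0)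
    (hFe : ∀ z ∈ U, c * z + d ≠ 0 → F (γ z) = ρ (F z))
    (fd fdd h : ℂ → ℂ)
    (hfd : ∀ z, fd z = deriv f z / deriv g z)
    (hfdd : ∀ z, fdd z = deriv fd z / deriv g z)
    (hh : ∀ z, h z = fd z / (F z - f z) + fdd z / (2 * fd z)) :
    ∀ z ∈ U, c * z + d ≠ 0 → deriv g z ≠ 0 → deriv g (γ z) ≠ 0 →
      fd z ≠ 0 → fd (γ z) ≠ 0 → F z ≠ f z → F (γ z) ≠ f (γ z) →
      h (γ z) = h z := by
  -- the open set where everything is defined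
  have hVopen : IsOpen {w : ℂ | w ∈ U ∧ c * w + d ≠ 0} := by
    have hcont : Continuous fun w : ℂ => c * w + d := by continuity
    exact hU.inter (isOpen_compl_singleton.preimage hcont)
  -- derivative of γ
  have hγder : ∀ w : ℂ, c * w + d ≠ 0 → HasDerivAt γ (((c * w + d) ^ 2)⁻¹) w := by
    intro w hw
    have h1 : HasDerivAt (fun z : ℂ => a * z + b) a w := by
      simpa using ((hasDerivAt_id w).const_mul a).add_const b
    have h2 : HasDerivAt (fun z : ℂ => c * z + d) c w := by
      simpa using ((hasDerivAt_id w).const_mul c).add_const d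
    have h3 := h1.div h2 hw
    rw [hγ]
    refine HasDerivAt.congr_deriv h3 ?_
    rw [show a * (c * w + d) - (a * w + b) * c = 1 by linear_combination hdet, one_div]
  -- derivative of ρ
  have hρder : ∀ u : ℂ, ch * u + dh ≠ 0 → HasDerivAt ρ (((ch * u + dh) ^ 2)⁻¹) u := by
    intro u hu
    have h1 : HasDerivAt (fun z : ℂ => ah * z + bh) ah u := by
      simpa using ((hasDerivAt_id u).const_mul ah).add_const bh
    have h2 : HasDerivAt (fun z : ℂ => ch * z + dh) ch u := by
      simpa using ((hasDerivAt_id u).const_mul ch).add_const dh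
    have h3 := h1.div h2 hu
    rw [hρ]
    refine HasDerivAt.congr_deriv h3 ?_
    rw [show ah * (ch * u + dh) - (ah * u + bh) * ch = 1 by linear_combination hdet', one_div]
  -- chain rule identity for g
  have key_g : ∀ w, w ∈ U → c * w + d ≠ 0 →
      deriv g (γ w) * ((c * w + d) ^ 2)⁻¹ = deriv g w := by
    intro w hwU hwD
    have hmem : {w : ℂ | w ∈ U ∧ c * w + d ≠ 0} ∈ nhds w := hVopen.mem_nhds ⟨hwU, hwD⟩
    have hev : (g ∘ γ) =ᶠ[nhds w] g :=
      Filter.eventuallyEq_of_mem hmem (fun x hx => hgi x hx.1 hx.2)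
    have hγd := hγder w hwD
    have hgd : DifferentiableAt ℂ g (γ w) := (hg (γ w) (hmaps w hwU hwD)).differentiableAt
    calc deriv g (γ w) * ((c * w + d) ^ 2)⁻¹ = deriv (g ∘ γ) w := by
          rw [deriv_comp w hgd hγd.differentiableAt, hγd.deriv]
      _ = deriv g w := hev.deriv_eq
  -- chain rule identity for f
  have key_f : ∀ w, w ∈ U → c * w + d ≠ 0 →
      deriv f (γ w) * ((c * w + d) ^ 2)⁻¹ = ((ch * f w + dh) ^ 2)⁻¹ * deriv f w := by
    intro w hwU hwD
    have hmem : {w : ℂ | w ∈ U ∧ c * w + d ≠ 0} ∈ nhds w := hVopen.mem_nhds ⟨hwU, hwD⟩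
    have hev : (f ∘ γ) =ᶠ[nhds w] (ρ ∘ f) :=
      Filter.eventuallyEq_of_mem hmem (fun x hx => hfe x hx.1 hx.2)
    have hγd := hγder w hwD
    have hfd1 : DifferentiableAt ℂ f (γ w) := (hf (γ w) (hmaps w hwU hwD)).differentiableAt
    have hρd := hρder (f w) (hfden w hwU hwD)
    have hfw : DifferentiableAt ℂ f w := (hf w hwU).differentiableAt
    calc deriv f (γ w) * ((c * w + d) ^ 2)⁻¹ = deriv (f ∘ γ) w := by
          rw [deriv_comp w hfd1 hγd.differentiableAt, hγd.deriv]
      _ = deriv (ρ ∘ f) w := hev.deriv_eq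
      _ = ((ch * f w + dh) ^ 2)⁻¹ * deriv f w := by
          rw [deriv_comp w hρd.differentiableAt hfw, hρd.deriv]
  -- equivariance of fd
  have key_fd : ∀ w, w ∈ U → c * w + d ≠ 0 →
      fd (γ w) = ((ch * f w + dh) ^ 2)⁻¹ * fd w := by
    intro w hwU hwD
    have hne : ((c * w + d) ^ 2)⁻¹ ≠ 0 := inv_ne_zero (pow_ne_zero _ hwD)
    rw [hfd, hfd, ← mul_div_mul_right (deriv f (γ w)) (deriv g (γ w)) hne,
      key_f w hwU hwD, key_g w hwU hwD, mul_div_assoc]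
  -- differentiability of fd
  have hfdfun : fd = fun w => deriv f w / deriv g w := funext hfd
  have hfdDiff : ∀ u, u ∈ U → deriv g u ≠ 0 → DifferentiableAt ℂ fd u := by
    intro u hu hgu
    rw [hfdfun]
    exact ((hf.deriv u hu).differentiableAt).div ((hg.deriv u hu).differentiableAt) hgu
  -- main argument
  intro z hzU hD hgz hgγ hPz hPγ hFfz hFfγ
  have hγzU : γ z ∈ U := hmaps z hzU hD
  have hγd := hγder z hD
  have hE : ch * f z + dh ≠ 0 := hfden z hzU hD
  have hEF : ch * F z + dh ≠ 0 := hFden z hzU hD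
  have hinv : ((c * z + d) ^ 2)⁻¹ ≠ 0 := inv_ne_zero (pow_ne_zero _ hD)
  -- differentiate the fd-equivariance identity at z
  have hmemz : {w : ℂ | w ∈ U ∧ c * w + d ≠ 0} ∈ nhds z := hVopen.mem_nhds ⟨hzU, hD⟩
  have hevfd : (fd ∘ γ) =ᶠ[nhds z] (fun w => ((ch * f w + dh) ^ 2)⁻¹ * fd w) :=
    Filter.eventuallyEq_of_mem hmemz (fun x hx => key_fd x hx.1 hx.2)
  have hfdγdiff : DifferentiableAt ℂ fd (γ z) := hfdDiff (γ z) hγzU hgγ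
  have hfdzdiff : DifferentiableAt ℂ fd z := hfdDiff z hzU hgz
  have hfz' : HasDerivAt f (deriv f z) z := (hf z hzU).differentiableAt.hasDerivAt
  have hEd : HasDerivAt (fun w : ℂ => ch * f w + dh) (ch * deriv f z) z := by
    simpa using (hfz'.const_mul ch).add_const dh
  have hE2 : HasDerivAt (fun w : ℂ => (ch * f w + dh) ^ 2)
      (2 * (ch * f z + dh) * (ch * deriv f z)) z := by
    have := hEd.pow 2
    refine HasDerivAt.congr_deriv this ?_
    ring
  have hE3 : HasDerivAt (fun w : ℂ => ((ch * f w + dh) ^ 2)⁻¹)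
      (-(2 * (ch * f z + dh) * (ch * deriv f z)) / ((ch * f z + dh) ^ 2) ^ 2) z :=
    hE2.inv (pow_ne_zero _ hE)
  have hRHS : HasDerivAt (fun w => ((ch * f w + dh) ^ 2)⁻¹ * fd w)
      (-(2 * (ch * f z + dh) * (ch * deriv f z)) / ((ch * f z + dh) ^ 2) ^ 2 * fd z
        + ((ch * f z + dh) ^ 2)⁻¹ * deriv fd z) z :=
    hE3.mul hfdzdiff.hasDerivAt
  have hE4 : deriv fd (γ z) * ((c * z + d) ^ 2)⁻¹ =
      -(2 * (ch * f z + dh) * (ch * deriv f z)) / ((ch * f z + dh) ^ 2) ^ 2 * fd z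
        + ((ch * f z + dh) ^ 2)⁻¹ * deriv fd z := by
    calc deriv fd (γ z) * ((c * z + d) ^ 2)⁻¹ = deriv (fd ∘ γ) z := by
          rw [deriv_comp z hfdγdiff hγd.differentiableAt, hγd.deriv]
      _ = _ := by rw [hevfd.deriv_eq, hRHS.deriv]
  -- compute fdd (γ z)
  have hfddγ : fdd (γ z) =
      (-(2 * (ch * f z + dh) * (ch * deriv f z)) / ((ch * f z + dh) ^ 2) ^ 2 * fd z
        + ((ch * f z + dh) ^ 2)⁻¹ * deriv fd z) / deriv g z := by
    rw [hfdd, ← mul_div_mul_right (deriv fd (γ z)) (deriv g (γ z)) hinv,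
      hE4, key_g z hzU hD]
  have hdf : deriv f z = fd z * deriv g z := by
    rw [hfd z]; exact (div_mul_cancel₀ _ hgz).symm
  have hdfd : deriv fd z = fdd z * deriv g z := by
    rw [hfdd z]; exact (div_mul_cancel₀ _ hgz).symm
  have hfddγ' : fdd (γ z) = -(2 * ch) * fd z ^ 2 / (ch * f z + dh) ^ 3
      + fdd z / (ch * f z + dh) ^ 2 := by
    rw [hfddγ, hdf, hdfd]
    field_simp
  -- the difference of Möbius images
  have hdiffne : (ah * F z + bh) / (ch * F z + dh) - (ah * f z + bh) / (ch * f z + dh) ≠ 0 := by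
    have := hFfγ
    rw [hfe z hzU hD, hFe z hzU hD, hρ] at this
    exact sub_ne_zero.mpr this
  have hdiff_eq : (ah * F z + bh) / (ch * F z + dh) - (ah * f z + bh) / (ch * f z + dh)
      = (F z - f z) / ((ch * F z + dh) * (ch * f z + dh)) := by
    field_simp
    have hEF' : F z * ch + dh ≠ 0 := by intro h0; apply hEF; linear_combination h0
    rw [sub_eq_iff_eq_add, div_add' _ _ _ hEF', div_left_inj' hEF']
    linear_combination (F z - f z) * hdet'
  have hFfz' : F z - f z ≠ 0 := sub_ne_zero.mpr hFfz
  -- final algebra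
  have term1 : fd (γ z) / (F (γ z) - f (γ z))
      = fd z * (ch * F z + dh) / ((ch * f z + dh) * (F z - f z)) := by
    rw [key_fd z hzU hD, hfe z hzU hD, hFe z hzU hD, hρ]
    simp only []
    rw [hdiff_eq, div_div_eq_mul_div]
    field_simp
  have term2 : fdd (γ z) / (2 * fd (γ z))
      = -(ch * fd z) / (ch * f z + dh) + fdd z / (2 * fd z) := by
    rw [hfddγ', key_fd z hzU hD]
    field_simp
  rw [hh (γ z), hh z, term1, term2]
  field_simp
  ring
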